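/- Covering constraints are equivalent to Sinkhorn marginal constraints: let l ≥ 1, c ∈ ℝ_{≥0}^l and d > 0 with Σ_{i=1}^l c_i ≥ d, let γ = ⌊Σ_{i=1}^l c_i / d⌋, and define u_c = (c_1, …, c_l, γd) ∈ ℝ_{≥0}^{l+1} and v_c = ((γ+1)d, Σ_{i=1}^l c_i − d). Then a vector x ∈ [0,1]^l satisfies Σ_{i=1}^l c_i x_i ≥ d if and only if there exists a matrix Γ ∈ [0,1]^{2×(l+1)} with Γ_{1,i} = x_i for i = 1,…,l, Σ_{r=1}^2 Γ_{r,j} = 1 for every column j, Σ_{j=1}^{l+1} Γ_{1,j} u_{c,j} = (γ+1)d, and Σ_{j=1}^{l+1} Γ_{2,j} u_{c,j} = Σ_{i=1}^l c_i − d. -/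
import Mathlib


open Finset

noncomputable section

/-- LinSAT encoding of a covering constraint: x ∈ [0,1]^l satisfies Σ c_i x_i ≥ d iff the
Sinkhorn marginal constraints with column marginals u_c = (c_1, …, c_l, γd), where
γ = ⌊Σ c_i / d⌋, and row marginals v_c = ((γ+1)d, Σ c_i − d) are satisfiable by some
Γ ∈ [0,1]^{2×(l+1)} whose first row restricted to the first l columns is x. -/
theorem stmt12
    {l : ℕ} (hl : 0 < l)
    (c : Fin l → ℝ) (hc : ∀ i, 0 ≤ c i) (d : ℝ) (hd : 0 < d)
    (hcd : d ≤ ∑ i, c i)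
    (x : Fin l → ℝ) (hx : ∀ i, x i ∈ Set.Icc (0 : ℝ) 1) :
    (d ≤ ∑ i, c i * x i) ↔
      ∃ Γ : Matrix (Fin 2) (Fin (l + 1)) ℝ,
        (∀ r j, Γ r j ∈ Set.Icc (0 : ℝ) 1) ∧
        (∀ i : Fin l, Γ 0 i.castSucc = x i) ∧
        (∀ j, ∑ r, Γ r j = 1) ∧
        (∑ j, Γ 0 j * (Fin.snoc c ((⌊(∑ i, c i) / d⌋ : ℝ) * d) : Fin (l + 1) → ℝ) j =
          ((⌊(∑ i, c i) / d⌋ : ℝ) + 1) * d) ∧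
        (∑ j, Γ 1 j * (Fin.snoc c ((⌊(∑ i, c i) / d⌋ : ℝ) * d) : Fin (l + 1) → ℝ) j = (∑ i, c i) - d) := by
  set S := ∑ i, c i with hS
  set g : ℝ := (⌊S / d⌋ : ℝ) with hg
  have hg1 : (1 : ℝ) ≤ g := by
    have h1 : (1 : ℤ) ≤ ⌊S / d⌋ := Int.le_floor.mpr (by
      rw [Int.cast_one]; exact (one_le_div hd).mpr hcd)
    rw [hg]; exact_mod_cast h1
  have hSlt : S < (g + 1) * d := by
    have h2 := Int.lt_floor_add_one (S / d)
    have h3 : S / d < g + 1 := by rw [hg]; push_cast; exact_mod_cast h2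
    calc S = S / d * d := by field_simp
    _ < (g + 1) * d := mul_lt_mul_of_pos_right h3 hd
  have hgd : 0 < g * d := mul_pos (lt_of_lt_of_le zero_lt_one hg1) hd
  constructor
  · intro h
    set t : ℝ := ((g + 1) * d - ∑ i, c i * x i) / (g * d) with ht
    have hcx_le : ∑ i, c i * x i ≤ S := by
      rw [hS]
      refine Finset.sum_le_sum fun i _ => ?_
      have hxi := hx i
      nlinarith [hc i, hxi.1, hxi.2]
    have ht0 : 0 ≤ t := div_nonneg (by linarith) hgd.le
    have ht1 : t ≤ 1 := by
      rw [ht, div_le_one hgd]; linarith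
    have key : t * (g * d) = (g + 1) * d - ∑ i, c i * x i := by
      rw [ht]; field_simp
    have hsnoc : ∀ j : Fin (l + 1), (Fin.snoc x t : Fin (l + 1) → ℝ) j ∈ Set.Icc (0 : ℝ) 1 := by
      intro j
      refine Fin.lastCases ?_ ?_ j
      · simpa using ⟨ht0, ht1⟩
      · intro i; simpa using hx i
    set y : Fin (l + 1) → ℝ := (Fin.snoc x t : Fin (l + 1) → ℝ) with hy
    refine ⟨Matrix.of fun r j => if r = 0 then y j else 1 - y j, ?_, ?_, ?_, ?_, ?_⟩
    · intro r j
      rcases (hsnoc j) with ⟨h0, h1⟩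
      by_cases hr : r = 0 <;> simp [hr] <;> constructor <;> linarith
    · intro i
      simp [hy, Fin.snoc_castSucc]
    · intro j
      rw [Fin.sum_univ_two]
      norm_num
    · rw [Fin.sum_univ_castSucc]
      simp only [Matrix.of_apply, hy, Fin.snoc_castSucc, Fin.snoc_last]
      norm_num
      have hsum : ∑ i : Fin l, x i * c i = ∑ i, c i * x i :=
        Finset.sum_congr rfl fun i _ => mul_comm _ _
      rw [hsum]
      linarith [key]
    · rw [Fin.sum_univ_castSucc]
      have h10 : (1 : Fin 2) ≠ 0 := by decide
      simp only [Matrix.of_apply, if_neg h10, hy, Fin.snoc_castSucc, Fin.snoc_last]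
      norm_num
      have hsum : ∑ i : Fin l, (1 - x i) * c i = S - ∑ i, c i * x i := by
        rw [hS, ← Finset.sum_sub_distrib]
        refine Finset.sum_congr rfl fun i _ => by ring
      rw [hsum]
      linarith [key]
  · rintro ⟨Γ, hbound, hrow, hcol, hsum0, -⟩
    have hlast : Γ 0 (Fin.last l) ≤ 1 := (hbound 0 (Fin.last l)).2
    rw [Fin.sum_univ_castSucc] at hsum0
    have hsum : ∑ i : Fin l, Γ 0 i.castSucc *
        (Fin.snoc c (g * d) : Fin (l + 1) → ℝ) i.castSucc = ∑ i, c i * x i := by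
      refine Finset.sum_congr rfl fun i _ => ?_
      rw [hrow i, Fin.snoc_castSucc, mul_comm]
    rw [hsum, Fin.snoc_last] at hsum0
    nlinarith [hlast, hgd]
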